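/- If G is an ancestral graph satisfying the boundary containment property and π is a path of minimal length among all paths m-connecting v and w given C, then no two non-consecutive vertices on π are adjacent. -/

import Mathlib

/-- Possible edge types between an ordered pair of distinct vertices of a
simple mixed graph.  `arrowTo` at `(v, w)` means `v → w`, `arrowFrom` means
`v ← w`, `undir` means `v − w` and `bidir` means `v ↔ w`. -/
inductive EType : Type
  | none | undir | arrowTo | arrowFrom | bidir
deriving DecidableEq

/-- The edge type seen from the reversed ordered pair of vertices. -/
def EType.mirror : EType → EType
  | .none => .none
  | .undir => .undir
  | .arrowTo => .arrowFrom
  | .arrowFrom => .arrowTo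
  | .bidir => .bidir

/-- A simple mixed graph: at most one edge (undirected, directed or
bi-directed) between any two distinct vertices, and no self loops. -/
structure MixedGraph (V : Type) where
  E : V → V → EType
  no_loop : ∀ v, E v v = .none
  symm : ∀ v w, E w v = (E v w).mirror

/-- `(a, b, c)` are three consecutive vertices on the path `p`. -/
def ConsecTriple {V : Type} (p : List V) (a b c : V) : Prop :=
  ∃ l1 l2, p = l1 ++ a :: b :: c :: l2

namespace MixedGraph

variable {V : Type} (G : MixedGraph V)

/-- `v − w` is an edge of `G`. -/
def Undir (v w : V) : Prop := G.E v w = .undir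

/-- `v → w` is an edge of `G`. -/
def Dir (v w : V) : Prop := G.E v w = .arrowTo

/-- `v ↔ w` is an edge of `G`. -/
def Bidir (v w : V) : Prop := G.E v w = .bidir

/-- `v` and `w` are adjacent (joined by some edge). -/
def Adj (v w : V) : Prop := G.E v w ≠ .none

/-- The edge between `a` and `b` has an arrowhead at `b`. -/
def HeadAt (a b : V) : Prop := G.E a b = .arrowTo ∨ G.E a b = .bidir

/-- Closed boundary: `v` together with its adjacent vertices. -/
def Bd (v : V) : Set V := insert v {w | G.Adj v w}

/-- A set of vertices is complete if all of its pairs of distinct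
vertices are adjacent. -/
def Complete (S : Set V) : Prop := ∀ v ∈ S, ∀ w ∈ S, v ≠ w → G.Adj v w

/-- A vertex is simplicial if its closed boundary is complete. -/
def Simplicial (v : V) : Prop := G.Complete (G.Bd v)

/-- `v` is an ancestor of `w`: `v = w` or there is a directed path from
`v` to `w`. -/
def Anc (v w : V) : Prop := Relation.ReflTransGen G.Dir v w

/-- The set of ancestors of vertices in `C`. -/
def anSet (C : Set V) : Set V := {v | ∃ c ∈ C, G.Anc v c}

/-- `G` is an ancestral graph. -/
def Ancestral : Prop :=
  (∀ v w, G.Dir v w → ¬ G.Anc w v) ∧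
  (∀ v w, G.Undir v w → ∀ u, ¬ G.HeadAt u v) ∧
  (∀ v w, G.Bidir v w → ¬ G.Anc v w)

/-- The boundary containment property. -/
def BdContain : Prop :=
  (∀ v w, G.Undir v w → G.Bd v = G.Bd w) ∧
  (∀ v w, G.Dir v w → G.Bd v ⊆ G.Bd w)

/-- `b` is a collider between consecutive neighbours `a` and `c`. -/
def Collider (a b c : V) : Prop := G.HeadAt a b ∧ G.HeadAt c b

/-- A path: a list of distinct vertices, consecutive ones adjacent. -/
def IsPath (p : List V) : Prop := p.Nodup ∧ p.Chain' G.Adj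

/-- `p` is an m-connecting path given `C`: every non-collider on it is
outside `C` and every collider on it is an ancestor of `C`. -/
def IsMConnPath (C : Set V) (p : List V) : Prop :=
  G.IsPath p ∧
  ∀ a b c, ConsecTriple p a b c →
    (G.Collider a b c → b ∈ G.anSet C) ∧ (¬ G.Collider a b c → b ∉ C)

/-- `v` and `w` are m-connected given `C`. -/
def MConn (v w : V) (C : Set V) : Prop :=
  ∃ p, G.IsMConnPath C p ∧ p.head? = some v ∧ p.getLast? = some w

/-- `v` and `w` are m-separated given `C`. -/
def MSep (v w : V) (C : Set V) : Prop := ¬ G.MConn v w C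

/-- A maximal (ancestral) graph: every pair of distinct non-adjacent
vertices is m-separated given some set. -/
def Maximal : Prop :=
  ∀ v w, v ≠ w → ¬ G.Adj v w → ∃ C : Set V, v ∉ C ∧ w ∉ C ∧ G.MSep v w C

/-- `G` is a bi-directed graph. -/
def Bidirected : Prop := ∀ v w, G.E v w = .none ∨ G.E v w = .bidir

/-- `G` is an undirected graph. -/
def UndirectedG : Prop := ∀ v w, G.E v w = .none ∨ G.E v w = .undir

/-- `G` is a directed acyclic graph. -/
def IsDAG : Prop :=
  (∀ v w, G.E v w = .none ∨ G.E v w = .arrowTo ∨ G.E v w = .arrowFrom) ∧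
  (∀ v w, G.Dir v w → ¬ G.Anc w v)

/-- `G` and `H` have the same skeleton. -/
def SameSkeleton (H : MixedGraph V) : Prop := ∀ v w, G.Adj v w ↔ H.Adj v w

/-- `G` and `H` are Markov equivalent: their m-separation relations
coincide. -/
def MarkovEquiv (H : MixedGraph V) : Prop :=
  ∀ v w (C : Set V), v ≠ w → v ∉ C → w ∉ C → (G.MSep v w C ↔ H.MSep v w C)

open Classical in
/-- The edge map obtained from `G` by dropping all arrowheads at
simplicial vertices. -/
noncomputable def dropE (v w : V) : EType :=
  match G.E v w with
  | .none => .none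
  | .undir => .undir
  | .arrowTo => if G.Simplicial w then .undir else .arrowTo
  | .arrowFrom => if G.Simplicial v then .undir else .arrowFrom
  | .bidir =>
      if G.Simplicial v then (if G.Simplicial w then .undir else .arrowTo)
      else (if G.Simplicial w then .arrowFrom else .bidir)

/-- The graph obtained from `G` by dropping all arrowheads at simplicial
vertices; for a bi-directed graph `G` this is the simplicial graph `Gˢ`. -/
noncomputable def drop : MixedGraph V where
  E := G.dropE
  no_loop v := by simp [dropE, G.no_loop]
  symm v w := by
    unfold dropE
    rw [G.symm v w]
    cases h : G.E v w <;>
      simp only [EType.mirror] <;> split_ifs <;> simp_all [EType.mirror]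

open Classical in
/-- The edge map of the minimally oriented graph `G^min_<`: starting from
the simplicial graph, each bi-directed edge `v ↔ w` with `Bd v ⊆ Bd w`
and `v < w` is replaced by `v → w`. -/
noncomputable def gminE [LinearOrder V] (v w : V) : EType :=
  match G.dropE v w with
  | .bidir =>
      if G.Bd v ⊆ G.Bd w ∧ v < w then .arrowTo
      else if G.Bd w ⊆ G.Bd v ∧ w < v then .arrowFrom
      else .bidir
  | e => e

/-- The graph `G^min_<` produced by Algorithm 4.2 from `G` and the total
order on `V`. -/
noncomputable def gmin [LinearOrder V] : MixedGraph V where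
  E := G.gminE
  no_loop v := by
    have h := G.drop.no_loop v
    simp only [drop] at h
    simp [gminE, h]
  symm v w := by
    have h := G.drop.symm v w
    simp only [drop] at h
    unfold gminE
    rw [h]
    cases hE : G.dropE v w <;> simp only [EType.mirror]
    case bidir =>
      by_cases c1 : G.Bd v ⊆ G.Bd w ∧ v < w
      · have c2 : ¬ (G.Bd w ⊆ G.Bd v ∧ w < v) := fun h' => lt_asymm c1.2 h'.2
        simp [c1, c2, EType.mirror]
      · by_cases c2 : G.Bd w ⊆ G.Bd v ∧ w < v
        · simp [c1, c2, EType.mirror]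
        · simp [c1, c2, EType.mirror]

/-- Total number of arrowheads of `G`: the number of directed edges plus
twice the number of bi-directed edges. -/
noncomputable def arr : ℕ :=
  {p : V × V | G.Dir p.1 p.2}.ncard + {p : V × V | G.Bidir p.1 p.2}.ncard

end MixedGraph

/-- `Gm` is a minimally oriented graph for `G`. -/
def MinOriented {V : Type} (G Gm : MixedGraph V) : Prop :=
  Gm.Ancestral ∧ Gm.Maximal ∧ G.MarkovEquiv Gm ∧
  ∀ H : MixedGraph V, H.Ancestral → H.Maximal → G.MarkovEquiv H → Gm.arr ≤ H.arr

section AuxStmt3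

open List

variable {V : Type} {G : MixedGraph V}

private lemma aux_adj_symm {a b : V} (h : G.Adj a b) : G.Adj b a := by
  unfold MixedGraph.Adj at h ⊢
  rw [G.symm a b]
  cases hE : G.E a b <;> simp_all [EType.mirror]

private lemma aux_adj_of_headAt {a b : V} (h : G.HeadAt a b) : G.Adj a b := by
  unfold MixedGraph.HeadAt at h
  unfold MixedGraph.Adj
  rcases h with h | h <;> simp [h]

private lemma aux_headAt_no_anc (hA : G.Ancestral) {x c : V} (h : G.HeadAt x c)
    (han : G.Anc c x) : False := by
  rcases h with h | h
  · exact hA.1 x c h han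
  · have hb : G.Bidir c x := by
      unfold MixedGraph.Bidir
      rw [G.symm x c, h]
      rfl
    exact hA.2.2 c x hb han

private lemma aux_undir_no_head (hA : G.Ancestral) {a b u : V} (h : G.Undir a b)
    (hh : G.HeadAt u a) : False :=
  hA.2.1 a b h u hh

private lemma aux_undir_symm {a b : V} (h : G.Undir a b) : G.Undir b a := by
  unfold MixedGraph.Undir at h ⊢
  rw [G.symm a b, h]
  rfl

private lemma aux_not_headAt {a b : V} (hadj : G.Adj a b) (h : ¬ G.HeadAt b a) :
    G.Dir a b ∨ G.Undir a b := by
  have hm := G.symm a b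
  cases hE : G.E a b with
  | none => exact absurd hE hadj
  | undir => exact Or.inr hE
  | arrowTo => exact Or.inl hE
  | arrowFrom =>
      exact absurd (show G.HeadAt b a from Or.inl (by rw [hm, hE]; rfl)) h
  | bidir =>
      exact absurd (show G.HeadAt b a from Or.inr (by rw [hm, hE]; rfl)) h

private lemma aux_headAt_rev_bidir {a b : V} (h : G.E a b = .bidir) : G.HeadAt b a :=
  Or.inr (by rw [G.symm a b, h]; rfl)

private lemma aux_not_headAt_rev_dir {a b : V} (h : G.E a b = .arrowTo) : ¬ G.HeadAt b a := by
  have h2 : G.E b a = .arrowFrom := by rw [G.symm a b, h]; rfl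
  rintro (h' | h') <;> rw [h2] at h' <;> simp_all

private lemma aux_mem_bd {a b : V} (h : G.Adj a b) : b ∈ G.Bd a := by
  unfold MixedGraph.Bd
  exact Set.mem_insert_iff.mpr (Or.inr h)

private lemma aux_adj_of_bd {a b : V} (h : b ∈ G.Bd a) (hne : b ≠ a) : G.Adj a b := by
  unfold MixedGraph.Bd at h
  rcases Set.mem_insert_iff.mp h with h | h
  · exact absurd h hne
  · exact h

private lemma aux_anSet_dir {C : Set V} {a m : V} (h : G.Dir a m) (hm : m ∈ G.anSet C) :
    a ∈ G.anSet C := by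
  obtain ⟨c, hc, hanc⟩ := hm
  exact ⟨c, hc, Relation.ReflTransGen.head h hanc⟩

private lemma aux_anc_two {a b c : V} (h1 : G.Dir a b) (h2 : G.Dir b c) : G.Anc a c :=
  Relation.ReflTransGen.head h1 (Relation.ReflTransGen.single h2)

private lemma aux_triple_cons {d : V} {l : List V} {a b c : V} :
    ConsecTriple (d :: l) a b c ↔ (d = a ∧ ∃ l', l = b :: c :: l') ∨ ConsecTriple l a b c := by
  constructor
  · rintro ⟨L, R, h⟩
    cases L with
    | nil =>
      simp only [nil_append, cons.injEq] at h
      exact Or.inl ⟨h.1, R, h.2⟩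
    | cons e L' =>
      simp only [cons_append, cons.injEq] at h
      exact Or.inr ⟨L', R, h.2⟩
  · rintro (⟨rfl, l', rfl⟩ | ⟨L, R, rfl⟩)
    · exact ⟨[], l', rfl⟩
    · exact ⟨d :: L, R, rfl⟩

private lemma aux_triple_of_left {s t : List V} {a b c : V} (h : ConsecTriple s a b c) :
    ConsecTriple (s ++ t) a b c := by
  obtain ⟨L, R, rfl⟩ := h
  exact ⟨L, R ++ t, by simp⟩

private lemma aux_triple_of_right {s t : List V} {a b c : V} (h : ConsecTriple t a b c) :
    ConsecTriple (s ++ t) a b c := by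
  obtain ⟨L, R, rfl⟩ := h
  exact ⟨s ++ L, R, by simp⟩

private lemma aux_triple_append {s t : List V} {a b c : V} (h : ConsecTriple (s ++ t) a b c) :
    ConsecTriple s a b c ∨
      (∃ s', s = s' ++ [a, b] ∧ ∃ t', t = c :: t') ∨
      (∃ s', s = s' ++ [a] ∧ ∃ t', t = b :: c :: t') ∨
      ConsecTriple t a b c := by
  induction s with
  | nil =>
    refine Or.inr (Or.inr (Or.inr ?_))
    simpa using h
  | cons d s ih =>
    rw [cons_append, aux_triple_cons] at h
    rcases h with ⟨rfl, l', hl⟩ | h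
    · cases s with
      | nil => exact Or.inr (Or.inr (Or.inl ⟨[], rfl, l', by simpa using hl⟩))
      | cons e s' =>
        rw [cons_append] at hl
        injection hl with he hl
        subst he
        cases s' with
        | nil => exact Or.inr (Or.inl ⟨[], rfl, l', by simpa using hl⟩)
        | cons f s'' =>
          rw [cons_append] at hl
          injection hl with hf hl
          subst hf
          exact Or.inl ⟨[], s'', rfl⟩
    · rcases ih h with h1 | ⟨s', rfl, ht⟩ | ⟨s', rfl, ht⟩ | h4
      · exact Or.inl (aux_triple_cons.mpr (Or.inr h1))
      · exact Or.inr (Or.inl ⟨d :: s', rfl, ht⟩)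
      · exact Or.inr (Or.inr (Or.inl ⟨d :: s', rfl, ht⟩))
      · exact Or.inr (Or.inr (Or.inr h4))

private lemma aux_triple_reverse {p : List V} {a b c : V} (h : ConsecTriple p.reverse a b c) :
    ConsecTriple p c b a := by
  obtain ⟨L, R, hp⟩ := h
  refine ⟨R.reverse, L.reverse, ?_⟩
  rw [← List.reverse_reverse p, hp]
  simp

private lemma aux_adj_consec {p s r : List V} {u t : V} (hc : List.Chain' G.Adj p)
    (h : p = s ++ u :: t :: r) : G.Adj u t := by
  subst h
  exact (List.isChain_cons_cons.mp (List.isChain_append.mp hc).2.1).1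

private lemma aux_mconn_reverse {C : Set V} {q : List V} (hq : G.IsMConnPath C q) :
    G.IsMConnPath C q.reverse := by
  obtain ⟨⟨hn, hc⟩, ht⟩ := hq
  refine ⟨⟨List.nodup_reverse.mpr hn, ?_⟩, ?_⟩
  · refine List.isChain_reverse.mpr ?_
    exact List.IsChain.imp (fun a b h => aux_adj_symm h) hc
  · intro a b c h
    have hcond := ht c b a (aux_triple_reverse h)
    exact ⟨fun h2 => hcond.1 ⟨h2.2, h2.1⟩, fun hnc => hcond.2 (fun h2 => hnc ⟨h2.2, h2.1⟩)⟩

private lemma aux_shortcut {C : Set V} {v w : V} {p : List V}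
    (hp : G.IsMConnPath C p) (hh : p.head? = some v) (hl : p.getLast? = some w)
    (hmin : ∀ q, G.IsMConnPath C q → q.head? = some v → q.getLast? = some w →
      p.length ≤ q.length)
    (s₀ mid t₀ : List V) (x y : V)
    (hdec : p = (s₀ ++ [x]) ++ (mid ++ (y :: t₀)))
    (hmid : mid ≠ [])
    (hadj : G.Adj x y)
    (condX : ∀ u, s₀.getLast? = some u →
      (G.Collider u x y → x ∈ G.anSet C) ∧ (¬ G.Collider u x y → x ∉ C))
    (condY : ∀ z, t₀.head? = some z →
      (G.Collider x y z → y ∈ G.anSet C) ∧ (¬ G.Collider x y z → y ∉ C)) :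
    False := by
  subst hdec
  have hsub : (s₀ ++ [x]) ++ (y :: t₀) <+ (s₀ ++ [x]) ++ (mid ++ (y :: t₀)) :=
    List.Sublist.append_left (List.sublist_append_right mid (y :: t₀)) _
  have hnodup : ((s₀ ++ [x]) ++ (y :: t₀)).Nodup := hsub.nodup hp.1.1
  have hchain : List.Chain' G.Adj ((s₀ ++ [x]) ++ (y :: t₀)) := by
    have h1 := List.isChain_append.mp hp.1.2
    have h2 := List.isChain_append.mp h1.2.1
    refine List.isChain_append.mpr ⟨h1.1, h2.2.1, ?_⟩
    intro x' hx' y' hy'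
    have hx'' : x = x' := by simpa [List.getLast?_concat] using hx'
    have hy'' : y = y' := by simpa using hy'
    subst hx''; subst hy''
    exact hadj
  have hhq : ((s₀ ++ [x]) ++ (y :: t₀)).head? = some v := by
    rw [← hh]
    cases s₀ <;> simp
  have hlq : ((s₀ ++ [x]) ++ (y :: t₀)).getLast? = some w := by
    rw [← hl, List.getLast?_append_cons, ← List.append_assoc, List.getLast?_append_cons]
  have hlen : ((s₀ ++ [x]) ++ (y :: t₀)).length < ((s₀ ++ [x]) ++ (mid ++ (y :: t₀))).length := by
    have hm : 0 < mid.length := List.length_pos_iff.mpr hmid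
    simp only [List.length_append, List.length_cons, List.length_nil]
    omega
  have htr : ∀ a' b' c', ConsecTriple ((s₀ ++ [x]) ++ (y :: t₀)) a' b' c' →
      (G.Collider a' b' c' → b' ∈ G.anSet C) ∧ (¬ G.Collider a' b' c' → b' ∉ C) := by
    intro a' b' c' h
    rcases aux_triple_append h with h1 | ⟨s', hs', t', ht'⟩ | ⟨s', hs', t', ht'⟩ | h4
    · exact hp.2 _ _ _ (aux_triple_of_left h1)
    · have h' : s₀ ++ [x] = (s' ++ [a']) ++ [b'] := by rw [hs']; simp
      obtain ⟨hs₀, hxb⟩ := List.append_inj' h' rfl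
      have hxb' : x = b' := by simpa using hxb
      subst hxb'
      injection ht' with h1 h2
      subst h1
      exact condX a' (by rw [hs₀]; exact List.getLast?_concat)
    · obtain ⟨hs₀, hxa⟩ := List.append_inj' hs' rfl
      have hxa' : x = a' := by simpa using hxa
      subst hxa'
      injection ht' with h1 h2
      subst h1
      exact condY c' (by rw [h2]; rfl)
    · have h4' : ConsecTriple (((s₀ ++ [x]) ++ mid) ++ (y :: t₀)) a' b' c' :=
        aux_triple_of_right h4
      rw [List.append_assoc] at h4'
      exact hp.2 _ _ _ h4'
  have := hmin ((s₀ ++ [x]) ++ (y :: t₀)) ⟨⟨hnodup, hchain⟩, htr⟩ hhq hlq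
  omega

private lemma aux_regress (hA : G.Ancestral) (hB : G.BdContain) {C : Set V} {v w : V}
    {p : List V}
    (hp : G.IsMConnPath C p) (hh : p.head? = some v) (hl : p.getLast? = some w)
    (hmin : ∀ q, G.IsMConnPath C q → q.head? = some v → q.getLast? = some w →
      p.length ≤ q.length) :
    ∀ (n : ℕ) (L : List V) (c : V) (M : List V) (b : V) (R : List V),
      L.length ≤ n →
      p = L ++ c :: (M ++ b :: R) →
      G.Dir c b →
      (∀ x, L.getLast? = some x → G.HeadAt x c) →
      (∀ t, (c :: M).getLast? = some t → G.HeadAt t b) →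
      L ≠ [] → False := by
  intro n
  induction n with
  | zero =>
    intro L c M b R hlen hdec hcb hxc hpb hL
    cases L with
    | nil => exact hL rfl
    | cons e L' => simp at hlen
  | succ n ih =>
    intro L c M b R hlen hdec hcb hxc hpb hL
    obtain ⟨L₀, x, rfl⟩ : ∃ L₀ x, L = L₀ ++ [x] := by
      rcases List.eq_nil_or_concat L with h | ⟨L₀, x, h⟩
      · exact absurd h hL
      · exact ⟨L₀, x, by simpa [List.concat_eq_append] using h⟩
    have hxcH : G.HeadAt x c := hxc x (List.getLast?_concat)
    have hxb_ne : x ≠ b := by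
      intro h
      subst h
      have hnd := hp.1.1
      rw [hdec, List.nodup_append] at hnd
      exact hnd.2.2 x (show x ∈ L₀ ++ [x] by simp) x (show x ∈ c :: (M ++ x :: R) by simp) rfl
    have hAdjxc : G.Adj x c := aux_adj_of_headAt hxcH
    have hxBd : x ∈ G.Bd b := hB.2 c b hcb (aux_mem_bd (aux_adj_symm hAdjxc))
    have hAdjbx : G.Adj b x := aux_adj_of_bd hxBd hxb_ne
    have hAdjxb : G.Adj x b := aux_adj_symm hAdjbx
    have hExb : G.E x b = .arrowTo ∨ G.E x b = .bidir := by
      cases hE : G.E x b with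
      | none => exact absurd hE hAdjxb
      | undir =>
        exact ((aux_undir_no_head hA (aux_undir_symm hE) (Or.inl hcb))).elim
      | arrowFrom =>
        have hbx : G.Dir b x := by
          unfold MixedGraph.Dir
          rw [G.symm x b, hE]
          rfl
        exact ((aux_headAt_no_anc hA hxcH (aux_anc_two hcb hbx))).elim
      | arrowTo => exact Or.inl rfl
      | bidir => exact Or.inr rfl
    have hHxb : G.HeadAt x b := hExb
    have condY : ∀ z, R.head? = some z →
        (G.Collider x b z → b ∈ G.anSet C) ∧ (¬ G.Collider x b z → b ∉ C) := by
      intro z hz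
      obtain ⟨R', rfl⟩ : ∃ R', R = z :: R' := by
        cases R with
        | nil => simp at hz
        | cons r R' =>
          have : r = z := by simpa using hz
          exact ⟨R', by rw [this]⟩
      obtain ⟨N₀, t, hNt⟩ : ∃ N₀ t, c :: M = N₀ ++ [t] := by
        rcases List.eq_nil_or_concat (c :: M) with h | ⟨N₀, t, h⟩
        · simp at h
        · exact ⟨N₀, t, by simpa [List.concat_eq_append] using h⟩
      have htb : G.HeadAt t b := hpb t (by rw [hNt]; exact List.getLast?_concat)
      have ptr : ConsecTriple p t b z := by
        refine ⟨(L₀ ++ [x]) ++ N₀, R', ?_⟩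
        rw [hdec, show c :: (M ++ b :: z :: R') = (c :: M) ++ (b :: z :: R') from rfl, hNt]
        simp
      have pc := hp.2 t b z ptr
      exact ⟨fun h => pc.1 ⟨htb, h.2⟩, fun hnc => pc.2 (fun h => hnc ⟨hHxb, h.2⟩)⟩
    have finish : (∀ u', L₀.getLast? = some u' →
        (G.Collider u' x b → x ∈ G.anSet C) ∧ (¬ G.Collider u' x b → x ∉ C)) → False := by
      intro hcx
      exact aux_shortcut hp hh hl hmin L₀ (c :: M) R x b (by simp [hdec]) (by simp) hAdjxb hcx condY
    rcases List.eq_nil_or_concat L₀ with hL₀ | ⟨L₁, u, hL₁⟩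
    · subst hL₀
      exact finish (fun u' hu' => by simp at hu')
    · rw [List.concat_eq_append] at hL₁
      subst hL₁
      have ptr2 : ConsecTriple p u x c := ⟨L₁, M ++ b :: R, by rw [hdec]; simp⟩
      have pc2 := hp.2 u x c ptr2
      have hgetu : (L₁ ++ [u]).getLast? = some u := List.getLast?_concat
      rcases hxcH with hxc1 | hxc1
      · -- x → c
        have hncx : ¬ G.HeadAt c x := aux_not_headAt_rev_dir hxc1
        have hExb' : G.E x b = .arrowTo := by
          rcases hExb with h | h
          · exact h
          · exact ((hA.2.2 x b h (aux_anc_two hxc1 hcb))).elim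
        have hnbx : ¬ G.HeadAt b x := aux_not_headAt_rev_dir hExb'
        refine finish (fun u' hu' => ?_)
        have huu : u' = u := by rw [hgetu] at hu'; exact (Option.some.inj hu').symm
        subst huu
        exact ⟨fun h => (hnbx h.2).elim, fun _ => pc2.2 (fun h => hncx h.2)⟩
      · -- x ↔ c
        have hcxH : G.HeadAt c x := aux_headAt_rev_bidir hxc1
        rcases hExb with hxb1 | hxb1
        · -- x → b
          by_cases hux : G.HeadAt u x
          · by_cases hxC : x ∈ C
            · refine ih (L₁ ++ [u]) x (c :: M) b R ?_ ?_ hxb1 ?_ ?_ (by simp)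
              · simp only [List.length_append, List.length_cons, List.length_nil] at hlen ⊢
                omega
              · rw [hdec]; simp
              · intro x' hx'
                rw [hgetu] at hx'
                have : x' = u := (Option.some.inj hx').symm
                subst this
                exact hux
              · intro t ht
                rw [List.getLast?_cons_cons] at ht
                exact hpb t ht
            · refine finish (fun u' hu' => ?_)
              have huu : u' = u := by rw [hgetu] at hu'; exact (Option.some.inj hu').symm
              subst huu
              have hnbx : ¬ G.HeadAt b x := aux_not_headAt_rev_dir hxb1
              exact ⟨fun h => (hnbx h.2).elim, fun _ => hxC⟩
          · refine finish (fun u' hu' => ?_)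
            have huu : u' = u := by rw [hgetu] at hu'; exact (Option.some.inj hu').symm
            subst huu
            exact ⟨fun h => (hux h.1).elim, fun _ => pc2.2 (fun h => hux h.1)⟩
        · -- x ↔ b
          have hbxH : G.HeadAt b x := aux_headAt_rev_bidir hxb1
          refine finish (fun u' hu' => ?_)
          have huu : u' = u := by rw [hgetu] at hu'; exact (Option.some.inj hu').symm
          subst huu
          exact ⟨fun h => pc2.1 ⟨h.1, hcxH⟩, fun hnc => pc2.2 (fun h => hnc ⟨h.1, hbxH⟩)⟩

private lemma aux_sideA (hA : G.Ancestral) (hB : G.BdContain) {C : Set V} {v w : V}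
    {p : List V}
    (hp : G.IsMConnPath C p) (hh : p.head? = some v) (hl : p.getLast? = some w)
    (hmin : ∀ q, G.IsMConnPath C q → q.head? = some v → q.getLast? = some w →
      p.length ≤ q.length)
    (l1 : List V) (a : V) (l2 : List V) (b : V) (l3 : List V)
    (hdec : p = l1 ++ a :: (l2 ++ b :: l3))
    (hne : l2 ≠ [])
    (hadj : G.Adj a b)
    (IH : ∀ (a' b' : V) (l1' l2' l3' : List V), p = l1' ++ a' :: (l2' ++ b' :: l3') →
      l2' ≠ [] → l2'.length < l2.length → ¬ G.Adj a' b') :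
    ∀ u, l1.getLast? = some u →
      (G.Collider u a b → a ∈ G.anSet C) ∧ (¬ G.Collider u a b → a ∉ C) := by
  intro u hu
  obtain ⟨l0, rfl⟩ : ∃ l0, l1 = l0 ++ [u] := by
    rcases List.eq_nil_or_concat l1 with h | ⟨l0, u', h⟩
    · rw [h] at hu; simp at hu
    · rw [List.concat_eq_append] at h
      rw [h, List.getLast?_concat] at hu
      exact ⟨l0, by rw [h, Option.some.inj hu]⟩
  obtain ⟨m, l2', rfl⟩ : ∃ m l2', l2 = m :: l2' := by
    cases l2 with
    | nil => exact absurd rfl hne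
    | cons m l2' => exact ⟨m, l2', rfl⟩
  have hbm_ne : b ≠ m := by
    have hnd := hp.1.1
    rw [hdec] at hnd
    intro h
    subst h
    have h2 := (List.nodup_append.mp hnd).2.1
    have h3 := (List.nodup_cons.mp h2).2
    have h4 := (List.nodup_cons.mp h3).1
    exact h4 (by simp)
  have ptr : ConsecTriple p u a m := ⟨l0, l2' ++ b :: l3, by rw [hdec]; simp⟩
  have pc := hp.2 u a m ptr
  have hAdj_am : G.Adj a m :=
    aux_adj_consec hp.1.2 (show p = (l0 ++ [u]) ++ a :: m :: (l2' ++ b :: l3) by rw [hdec]; simp)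
  by_cases hba : G.HeadAt b a
  · refine ⟨?_, fun hnc => pc.2 (fun h => hnc ⟨h.1, hba⟩)⟩
    intro hcol
    have hua : G.HeadAt u a := hcol.1
    by_cases hma : G.HeadAt m a
    · exact pc.1 ⟨hua, hma⟩
    · rcases aux_not_headAt hAdj_am hma with ham | ham
      · cases l2' with
        | nil =>
          have ptr2 : ConsecTriple p a m b := ⟨l0 ++ [u], l3, by rw [hdec]; simp⟩
          have pc2 := hp.2 a m b ptr2
          by_cases hbm : G.HeadAt b m
          · exact aux_anSet_dir ham (pc2.1 ⟨Or.inl ham, hbm⟩)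
          · have hAdj_mb : G.Adj m b :=
              aux_adj_consec hp.1.2
                (show p = ((l0 ++ [u]) ++ [a]) ++ m :: b :: l3 by rw [hdec]; simp)
            rcases aux_not_headAt hAdj_mb hbm with hmb | hmb
            · exact (aux_headAt_no_anc hA hba (aux_anc_two ham hmb)).elim
            · exact (aux_undir_no_head hA hmb (Or.inl ham)).elim
        | cons m2 l2'' =>
          have hAdjmb : G.Adj m b := aux_adj_of_bd (hB.2 a m ham (aux_mem_bd hadj)) hbm_ne
          exact (IH m b ((l0 ++ [u]) ++ [a]) (m2 :: l2'') l3 (by rw [hdec]; simp) (by simp)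
            (by simp) hAdjmb).elim
      · exact (aux_undir_no_head hA ham hua).elim
  · refine ⟨fun h => (hba h.2).elim, ?_⟩
    intro _
    by_cases hua : G.HeadAt u a
    · by_cases hma : G.HeadAt m a
      · rcases aux_not_headAt hadj hba with hab | hab
        · by_cases haC : a ∈ C
          · exfalso
            cases l2' with
            | cons m2 l2'' =>
              have hAdjmb : G.Adj m b := by
                refine aux_adj_symm (aux_adj_of_bd (hB.2 a b hab (aux_mem_bd hAdj_am)) ?_)
                exact fun h => hbm_ne h.symm
              exact IH m b ((l0 ++ [u]) ++ [a]) (m2 :: l2'') l3 (by rw [hdec]; simp) (by simp)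
                (by simp) hAdjmb
            | nil =>
              have hAdj_mb : G.Adj m b :=
                aux_adj_consec hp.1.2
                  (show p = ((l0 ++ [u]) ++ [a]) ++ m :: b :: l3 by rw [hdec]; simp)
              have hmbH : G.HeadAt m b := by
                by_cases h' : G.HeadAt m b
                · exact h'
                · exfalso
                  rcases aux_not_headAt (aux_adj_symm hAdj_mb) h' with hbm | hbm
                  · exact aux_headAt_no_anc hA hma (aux_anc_two hab hbm)
                  · exact aux_undir_no_head hA hbm (Or.inl hab)
              refine aux_regress hA hB hp hh hl hmin (l0 ++ [u]).length (l0 ++ [u]) a [m] b l3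
                le_rfl (by simp [hdec]) hab ?_ ?_ (by simp)
              · intro x' hx'
                have h2 : u = x' := by simpa [List.getLast?_concat] using hx'
                exact h2 ▸ hua
              · intro t ht
                have h2 : m = t := by simpa using ht
                exact h2 ▸ hmbH
          · exact haC
        · exact (aux_undir_no_head hA hab hma).elim
      · exact pc.2 (fun h => hma h.2)
    · exact pc.2 (fun h => hua h.1)

end AuxStmt3

/-- In an ancestral graph with the boundary containment
property, on a minimal-length m-connecting path no two non-consecutive
vertices are adjacent. -/
theorem stmt3 {V : Type} (G : MixedGraph V) (hA : G.Ancestral) (hB : G.BdContain)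
    (v w : V) (C : Set V) (p : List V)
    (hp : G.IsMConnPath C p) (hh : p.head? = some v) (hl : p.getLast? = some w)
    (hmin : ∀ q, G.IsMConnPath C q → q.head? = some v → q.getLast? = some w →
      p.length ≤ q.length)
    (a b : V) (l1 l2 l3 : List V) (hdec : p = l1 ++ a :: (l2 ++ b :: l3))
    (hne : l2 ≠ []) :
    ¬ G.Adj a b := by
  suffices H : ∀ (n : ℕ) (a' b' : V) (l1' l2' l3' : List V), l2'.length ≤ n →
      p = l1' ++ a' :: (l2' ++ b' :: l3') → l2' ≠ [] → ¬ G.Adj a' b' by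
    exact H l2.length a b l1 l2 l3 le_rfl hdec hne
  intro n
  induction n with
  | zero =>
    intro a' b' l1' l2' l3' hlen hdec' hne'
    cases l2' with
    | nil => exact absurd rfl hne'
    | cons x xs => simp at hlen
  | succ n ihn =>
    intro a' b' l1' l2' l3' hlen hdec' hne' hadj
    have IH : ∀ (a'' b'' : V) (l1'' l2'' l3'' : List V),
        p = l1'' ++ a'' :: (l2'' ++ b'' :: l3'') →
        l2'' ≠ [] → l2''.length < l2'.length → ¬ G.Adj a'' b'' := by
      intro a'' b'' l1'' l2'' l3'' hd hn hlt
      exact ihn a'' b'' l1'' l2'' l3'' (by omega) hd hn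
    have hp' : G.IsMConnPath C p.reverse := aux_mconn_reverse hp
    have hh' : p.reverse.head? = some w := by rw [List.head?_reverse]; exact hl
    have hl' : p.reverse.getLast? = some v := by rw [List.getLast?_reverse]; exact hh
    have hmin' : ∀ q, G.IsMConnPath C q → q.head? = some w → q.getLast? = some v →
        p.reverse.length ≤ q.length := by
      intro q hq hqh hql
      have := hmin q.reverse (aux_mconn_reverse hq) (by rw [List.head?_reverse]; exact hql)
        (by rw [List.getLast?_reverse]; exact hqh)
      simpa using this
    have hdecr : p.reverse = l3'.reverse ++ b' :: (l2'.reverse ++ a' :: l1'.reverse) := by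
      rw [hdec']; simp
    have IHr : ∀ (a'' b'' : V) (l1'' l2'' l3'' : List V),
        p.reverse = l1'' ++ a'' :: (l2'' ++ b'' :: l3'') →
        l2'' ≠ [] → l2''.length < l2'.reverse.length → ¬ G.Adj a'' b'' := by
      intro a'' b'' l1'' l2'' l3'' hd hn hlt hadj2
      have hd' : p = l3''.reverse ++ b'' :: (l2''.reverse ++ a'' :: l1''.reverse) := by
        rw [← List.reverse_reverse p, hd]; simp
      exact IH b'' a'' l3''.reverse l2''.reverse l1''.reverse hd' (by simpa using hn)
        (by simpa using hlt) (aux_adj_symm hadj2)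
    have condX := aux_sideA hA hB hp hh hl hmin l1' a' l2' b' l3' hdec' hne' hadj IH
    have condYr := aux_sideA hA hB hp' hh' hl' hmin' l3'.reverse b' l2'.reverse a' l1'.reverse
      hdecr (by simpa using hne') (aux_adj_symm hadj) IHr
    have condY : ∀ z, l3'.head? = some z →
        (G.Collider a' b' z → b' ∈ G.anSet C) ∧ (¬ G.Collider a' b' z → b' ∉ C) := by
      intro z hz
      have h := condYr z (by rw [List.getLast?_reverse]; exact hz)
      exact ⟨fun hc => h.1 ⟨hc.2, hc.1⟩, fun hnc => h.2 (fun hc => hnc ⟨hc.2, hc.1⟩)⟩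
    exact aux_shortcut hp hh hl hmin l1' l2' l3' a' b' (by rw [hdec']; simp) hne' hadj condX condY
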